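/- Let m be a positive integer, p ∈ [0,1], let k > m be a fixed integer and let l be a fixed integer with 2 ≤ l ≤ m. For integers t ≥ 2 define H(j,t+1) = p(2mt+1-j)/(t(2mt+1-2m)) + (1-p)j/(2mt) and K(j,t+1) = 1 - H(j,t+1) for m ≤ j ≤ 2mt, and G(l,t+1) = C(m,l)·H(k-l,t+1)^l·K(k-l,t+1)^{m-l}, where C(m,l) is the binomial coefficient. Then lim_{t→∞} G(l,t+1)·(t-1)/(t+1 - t·K(k,t+1)^m) = 0. -/

import Mathlib

open Filter

/-- The unconditional attachment probability `H(j,t+1)` to a vertex of degree `j`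
at time `t` in the PA-APA model (degree argument taken real). -/
noncomputable def Hpaapa (m : ℕ) (p : ℝ) (j : ℝ) (t : ℕ) : ℝ :=
  p * (2 * (m : ℝ) * t + 1 - j) / ((t : ℝ) * (2 * (m : ℝ) * t + 1 - 2 * m))
    + (1 - p) * j / (2 * (m : ℝ) * t)

lemma tendsto_inv_nat : Tendsto (fun t : ℕ => ((t : ℝ))⁻¹) atTop (nhds 0) :=
  tendsto_inv_atTop_zero.comp tendsto_natCast_atTop_atTop

lemma tendsto_ratio (a b c : ℝ) (ha : 0 < a) :
    Tendsto (fun t : ℕ => (a * t + b) / (a * t + c)) atTop (nhds 1) := by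
  have h1 : Tendsto (fun t : ℕ => (a + b * (t : ℝ)⁻¹) / (a + c * (t : ℝ)⁻¹)) atTop (nhds 1) := by
    have hnum : Tendsto (fun t : ℕ => a + b * (t : ℝ)⁻¹) atTop (nhds a) := by
      simpa using tendsto_const_nhds.add (tendsto_const_nhds.mul tendsto_inv_nat)
    have hden : Tendsto (fun t : ℕ => a + c * (t : ℝ)⁻¹) atTop (nhds a) := by
      simpa using tendsto_const_nhds.add (tendsto_const_nhds.mul tendsto_inv_nat)
    have h2 := hnum.div hden ha.ne'
    rw [div_self ha.ne'] at h2
    exact h2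
  have hat : Tendsto (fun t : ℕ => a * (t : ℝ) + c) atTop atTop := by
    apply tendsto_atTop_add_const_right
    exact Tendsto.const_mul_atTop ha tendsto_natCast_atTop_atTop
  refine h1.congr' ?_
  filter_upwards [hat.eventually_gt_atTop 0, eventually_ge_atTop 1] with t hden ht
  have ht1 : (1 : ℝ) ≤ t := by exact_mod_cast ht
  have ht0 : (t : ℝ) ≠ 0 := by linarith
  field_simp

lemma tendsto_tH (m : ℕ) (hm : 1 ≤ m) (p j : ℝ) :
    Tendsto (fun t : ℕ => (t : ℝ) * Hpaapa m p j t) atTop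
      (nhds (p + (1 - p) * j / (2 * m))) := by
  have hm1 : (1 : ℝ) ≤ m := by exact_mod_cast hm
  have hm0 : (0 : ℝ) < 2 * m := by linarith
  have hr := tendsto_ratio (2 * m) (1 - j) (1 - 2 * m) hm0
  have h := (hr.const_mul p).add (tendsto_const_nhds (x := (1 - p) * j / (2 * m)))
  refine Tendsto.congr' ?_ (by simpa using h)
  filter_upwards [eventually_ge_atTop 1] with t ht
  have ht1 : (1 : ℝ) ≤ t := by exact_mod_cast ht
  have ht0 : (t : ℝ) ≠ 0 := by linarith
  simp only [Hpaapa, mul_add]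
  have e1 : (t : ℝ) * (p * (2 * (m : ℝ) * t + 1 - j) / ((t : ℝ) * (2 * (m : ℝ) * t + 1 - 2 * m)))
      = p * (2 * (m : ℝ) * t + 1 - j) / (2 * (m : ℝ) * t + 1 - 2 * m) := by
    rw [← mul_div_assoc, mul_div_mul_left _ _ ht0]
  have e2 : (t : ℝ) * ((1 - p) * j / (2 * (m : ℝ) * t)) = (1 - p) * j / (2 * (m : ℝ)) := by
    rw [show 2 * (m : ℝ) * t = (t : ℝ) * (2 * m) by ring, ← mul_div_assoc,
      mul_div_mul_left _ _ ht0]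
  rw [e1, e2]
  ring

lemma tendsto_H (m : ℕ) (hm : 1 ≤ m) (p j : ℝ) :
    Tendsto (fun t : ℕ => Hpaapa m p j t) atTop (nhds 0) := by
  have h := tendsto_inv_nat.mul (tendsto_tH m hm p j)
  rw [zero_mul] at h
  refine Tendsto.congr' ?_ h
  filter_upwards [eventually_ge_atTop 1] with t ht
  have ht1 : (1 : ℝ) ≤ t := by exact_mod_cast ht
  have ht0 : (t : ℝ) ≠ 0 := by linarith
  field_simp

/-- Asymptotically only the one-edge transition contributes: for fixed `2 ≤ l ≤ m`,
with `G(l,t+1) = C(m,l) H(k-l,t+1)^l K(k-l,t+1)^{m-l}` and `K = 1 - H`,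
`G(l,t+1)(t-1)/(t+1 - t K(k,t+1)^m) → 0`. -/
theorem pa_apa_limit_multi_edge (m k l : ℕ) (hm : 1 ≤ m) (hk : m < k)
    (hl2 : 2 ≤ l) (hlm : l ≤ m) (p : ℝ) (hp0 : 0 ≤ p) (hp1 : p ≤ 1) :
    Tendsto (fun t : ℕ =>
      ((m.choose l : ℝ) * Hpaapa m p ((k : ℝ) - l) t ^ l
          * (1 - Hpaapa m p ((k : ℝ) - l) t) ^ (m - l))
        * ((t : ℝ) - 1) / ((t : ℝ) + 1 - (t : ℝ) * (1 - Hpaapa m p (k : ℝ) t) ^ m))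
      atTop (nhds 0) := by
  set C : ℝ := (m.choose l : ℝ)
  set j : ℝ := (k : ℝ) - l
  set c1 : ℝ := p + (1 - p) * j / (2 * m)
  set c2 : ℝ := p + (1 - p) * k / (2 * m)
  -- numerator tends to 0
  have hNum : Tendsto (fun t : ℕ =>
      (C * Hpaapa m p j t ^ l * (1 - Hpaapa m p j t) ^ (m - l)) * ((t : ℝ) - 1))
      atTop (nhds 0) := by
    have hK : Tendsto (fun t : ℕ => (1 - Hpaapa m p j t) ^ (m - l)) atTop (nhds 1) := by
      simpa using ((tendsto_const_nhds (x := (1:ℝ))).sub (tendsto_H m hm p j)).pow (m - l)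
    have hpowinv : Tendsto (fun t : ℕ => ((t : ℝ)⁻¹) ^ (l - 1)) atTop (nhds 0) := by
      have := tendsto_inv_nat.pow (l - 1)
      rwa [zero_pow (by omega : l - 1 ≠ 0)] at this
    have hrest : Tendsto (fun t : ℕ => (1 - (t : ℝ)⁻¹) * ((t : ℝ)⁻¹) ^ (l - 1))
        atTop (nhds 0) := by
      simpa using ((tendsto_const_nhds (x := (1:ℝ))).sub tendsto_inv_nat).mul hpowinv
    have h := (((tendsto_const_nhds (x := C)).mul
      ((tendsto_tH m hm p j).pow l)).mul hK).mul hrest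
    rw [mul_zero] at h
    refine Tendsto.congr' ?_ h
    filter_upwards [eventually_ge_atTop 1] with t ht
    have ht1 : (1 : ℝ) ≤ t := by exact_mod_cast ht
    have ht0 : (t : ℝ) ≠ 0 := by linarith
    obtain ⟨n, rfl⟩ : ∃ n, l = n + 1 := ⟨l - 1, by omega⟩
    set H := Hpaapa m p j t
    have key : ((t : ℝ) * H) ^ (n + 1) * ((1 - (t : ℝ)⁻¹) * ((t : ℝ)⁻¹) ^ (n + 1 - 1))
        = H ^ (n + 1) * ((t : ℝ) - 1) := by
      simp only [Nat.add_sub_cancel, mul_pow, inv_pow]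
      field_simp
      ring
    calc C * ((t : ℝ) * H) ^ (n + 1) * (1 - H) ^ (m - (n + 1))
          * ((1 - (t : ℝ)⁻¹) * ((t : ℝ)⁻¹) ^ (n + 1 - 1))
        = C * (1 - H) ^ (m - (n + 1)) *
            (((t : ℝ) * H) ^ (n + 1) * ((1 - (t : ℝ)⁻¹) * ((t : ℝ)⁻¹) ^ (n + 1 - 1))) := by
          ring
      _ = C * H ^ (n + 1) * (1 - H) ^ (m - (n + 1)) * ((t : ℝ) - 1) := by
          rw [key]; ring
  -- denominator tends to 1 + c2 * m
  have hDen : Tendsto (fun t : ℕ =>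
      (t : ℝ) + 1 - (t : ℝ) * (1 - Hpaapa m p (k : ℝ) t) ^ m)
      atTop (nhds (1 + c2 * m)) := by
    have hsum : Tendsto (fun t : ℕ => ∑ i ∈ Finset.range m, (1 - Hpaapa m p (k : ℝ) t) ^ i)
        atTop (nhds m) := by
      have := tendsto_finset_sum (Finset.range m) (fun i _ =>
        ((tendsto_const_nhds (x := (1:ℝ))).sub (tendsto_H m hm p (k : ℝ))).pow i)
      simpa using this
    have h := (tendsto_const_nhds (x := (1:ℝ))).add ((tendsto_tH m hm p (k : ℝ)).mul hsum)
    refine Tendsto.congr' ?_ (by simpa using h)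
    filter_upwards [] with t
    set H := Hpaapa m p (k : ℝ) t
    have hg := geom_sum_mul (1 - H) m
    linear_combination (-(t : ℝ)) * hg
  -- denominator limit nonzero
  have hc2 : 0 ≤ c2 := by
    have : 0 ≤ (1 - p) * k / (2 * m) := by
      apply div_nonneg
      · exact mul_nonneg (by linarith) (Nat.cast_nonneg k)
      · have : (1 : ℝ) ≤ m := by exact_mod_cast hm
        linarith
    simp only [c2]; linarith
  have hne : 1 + c2 * m ≠ 0 := by
    have : (0 : ℝ) ≤ c2 * m := mul_nonneg hc2 (Nat.cast_nonneg m)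
    positivity
  have := hNum.div hDen hne
  rwa [zero_div] at this
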